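/- arXiv:2604.16233 — 3 statements merged into one kernel-verified Lean document; each statement's English description precedes it below -/
import Mathlib

section
/- Let (t_i)_{i≥1} be the reduced tangent numbers (satisfying t_1 = 1 and t_i = (1/2) Σ_{j=1}^{i-1} C(2i-2,2j-1) t_j t_{i-j} for i > 1). Define the sequence (s_i)_{i≥0} by s_0 = 1 and s_i = -Σ_{j=0}^{i-1} C(2i-1, 2j) · s_j · (-1)^{i-j} · t_{i-j} for i ≥ 1. Then s_i = 2^{i-1} for all i ≥ 1. -/
open PowerSeries Finset

private lemma sum_Icc_one' (f : ℕ → ℚ) (m : ℕ) :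
    ∑ j ∈ Finset.Icc 1 m, f j = ∑ j ∈ Finset.range m, f (j + 1) := by
  induction m with
  | zero => simp
  | succ n ih => rw [Finset.sum_range_succ, ← ih, Finset.sum_Icc_succ_top (by omega)]

private lemma sum_range_odd' (g : ℕ → ℚ) (m : ℕ) (hg : ∀ k, k % 2 = 0 → g k = 0) :
    ∑ k ∈ Finset.range (2 * m + 1), g k = ∑ j ∈ Finset.range m, g (2 * j + 1) := by
  induction m with
  | zero => simpa using hg 0 rfl
  | succ n ih =>
      have h1 : 2 * (n + 1) + 1 = (2 * n + 1) + 1 + 1 := by ring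
      rw [h1, Finset.sum_range_succ, Finset.sum_range_succ, ih, hg (2 * n + 1 + 1) (by omega),
        Finset.sum_range_succ]
      rw [add_zero]

private lemma sum_range_even' (g : ℕ → ℚ) (m : ℕ) (hg : ∀ k, k % 2 = 1 → g k = 0) :
    ∑ k ∈ Finset.range (2 * m), g k = ∑ j ∈ Finset.range m, g (2 * j) := by
  induction m with
  | zero => simp
  | succ n ih =>
      have h1 : 2 * (n + 1) = (2 * n) + 1 + 1 := by ring
      rw [h1, Finset.sum_range_succ, Finset.sum_range_succ, ih, hg (2 * n + 1) (by omega),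
        Finset.sum_range_succ]
      rw [add_zero]

private lemma sys_zero (A₁ A₂ A₃ A₄ W V : PowerSeries ℚ)
    (hW : 2 * d⁄dX ℚ W = A₁ * W + A₂ * V)
    (hV : d⁄dX ℚ V = A₃ * W + A₄ * V)
    (hW0 : PowerSeries.coeff 0 W = 0) (hV0 : PowerSeries.coeff 0 V = 0) :
    W = 0 ∧ V = 0 := by
  have key : ∀ n, PowerSeries.coeff n W = 0 ∧ PowerSeries.coeff n V = 0 := by
    intro n
    induction n using Nat.strong_induction_on with
    | _ n ih =>
      match n with
      | 0 => exact ⟨hW0, hV0⟩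
      | Nat.succ m =>
        have hmul : ∀ (f g : PowerSeries ℚ), (∀ k, k ≤ m → PowerSeries.coeff k g = 0) →
            PowerSeries.coeff m (f * g) = 0 := by
          intro f g hgz
          rw [PowerSeries.coeff_mul]
          refine Finset.sum_eq_zero fun p hp => ?_
          have := Finset.HasAntidiagonal.mem_antidiagonal.mp hp
          rw [hgz p.2 (by omega), mul_zero]
        have hWz : ∀ k, k ≤ m → PowerSeries.coeff k W = 0 := fun k hk => (ih k (by omega)).1
        have hVz : ∀ k, k ≤ m → PowerSeries.coeff k V = 0 := fun k hk => (ih k (by omega)).2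
        constructor
        · have h1 := congrArg (PowerSeries.coeff m) hW
          rw [map_add, hmul A₁ W hWz, hmul A₂ V hVz, two_mul, map_add,
            PowerSeries.coeff_derivative] at h1
          have h3 : (PowerSeries.coeff (m + 1) W) * (2 * (m + 1)) = 0 := by linarith
          have h2 : (2 * ((m : ℚ) + 1)) ≠ 0 := by positivity
          exact (mul_eq_zero.mp h3).resolve_right h2
        · have h1 := congrArg (PowerSeries.coeff m) hV
          rw [map_add, hmul A₃ W hWz, hmul A₄ V hVz, PowerSeries.coeff_derivative] at h1
          have h2 : ((m : ℚ) + 1) ≠ 0 := by positivity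
          have h3 := mul_eq_zero.mp
            (by linarith : (PowerSeries.coeff (m + 1) V) * ((m : ℚ) + 1) = 0)
          exact h3.resolve_right h2
  constructor <;> ext n
  · simpa using (key n).1
  · simpa using (key n).2

/-- Let `(t_i)` be the reduced tangent numbers, characterized by
`t 1 = 1` and `t i = (1/2) ∑_{j=1}^{i-1} C(2i-2,2j-1) t_j t_{i-j}` for `i > 1`.
Define `(s_i)` by `s 0 = 1` and
`s i = -∑_{j=0}^{i-1} C(2i-1, 2j) · s_j · (-1)^{i-j} · t_{i-j}` for `i ≥ 1`.
Then `s i = 2^{i-1}` for all `i ≥ 1`. -/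
theorem solution_of_recursion (t s : ℕ → ℚ)
    (ht1 : t 1 = 1)
    (ht : ∀ i : ℕ, 1 < i →
      t i = (1 / 2) * ∑ j ∈ Finset.Icc 1 (i - 1),
        (Nat.choose (2 * i - 2) (2 * j - 1) : ℚ) * t j * t (i - j))
    (hs0 : s 0 = 1)
    (hs : ∀ i : ℕ, 1 ≤ i →
      s i = -∑ j ∈ Finset.range i,
        (Nat.choose (2 * i - 1) (2 * j) : ℚ) * s j * (-1) ^ (i - j) * t (i - j)) :
    ∀ i : ℕ, 1 ≤ i → s i = 2 ^ (i - 1) := by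
  classical
  set PA : PowerSeries ℚ :=
    PowerSeries.mk (fun n => if n % 2 = 1 then
      (-1) ^ ((n - 1) / 2) * t ((n + 1) / 2) / (Nat.factorial n : ℚ) else 0) with hPA
  set PS : PowerSeries ℚ :=
    PowerSeries.mk (fun n => if n % 2 = 0 then s (n / 2) / (Nat.factorial n : ℚ) else 0) with hPS
  set PC : PowerSeries ℚ :=
    PowerSeries.mk (fun n => if n % 2 = 0 then (2 : ℚ) ^ (n / 2) / (Nat.factorial n : ℚ) else 0)
    with hPC
  set PB : PowerSeries ℚ :=
    PowerSeries.mk (fun n => if n % 2 = 1 then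
      (2 : ℚ) ^ ((n + 1) / 2) / (Nat.factorial n : ℚ) else 0) with hPB
  have hAcoeff : ∀ n, PowerSeries.coeff n PA =
      if n % 2 = 1 then (-1) ^ ((n - 1) / 2) * t ((n + 1) / 2) / (Nat.factorial n : ℚ) else 0 :=
    fun n => by rw [hPA, PowerSeries.coeff_mk]
  have hScoeff : ∀ n, PowerSeries.coeff n PS =
      if n % 2 = 0 then s (n / 2) / (Nat.factorial n : ℚ) else 0 :=
    fun n => by rw [hPS, PowerSeries.coeff_mk]
  have hCcoeff : ∀ n, PowerSeries.coeff n PC =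
      if n % 2 = 0 then (2 : ℚ) ^ (n / 2) / (Nat.factorial n : ℚ) else 0 :=
    fun n => by rw [hPC, PowerSeries.coeff_mk]
  have hBcoeff : ∀ n, PowerSeries.coeff n PB =
      if n % 2 = 1 then (2 : ℚ) ^ ((n + 1) / 2) / (Nat.factorial n : ℚ) else 0 :=
    fun n => by rw [hPB, PowerSeries.coeff_mk]
  have fact_ne : ∀ n : ℕ, (Nat.factorial n : ℚ) ≠ 0 := fun n =>
    Nat.cast_ne_zero.mpr (Nat.factorial_ne_zero n)
  have hC2 : (PowerSeries.C (R := ℚ) 2) = (2 : ℚ⟦X⟧) := map_ofNat _ 2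
  -- the tangent ODE : 2 A' = 2 - A²
  have hA2 : 2 * d⁄dX ℚ PA = PowerSeries.C (R := ℚ) 2 - PA ^ 2 := by
    ext n
    rw [show (2 : ℚ⟦X⟧) = PowerSeries.C (R := ℚ) 2 from (map_ofNat _ 2).symm,
      PowerSeries.coeff_C_mul, map_sub, PowerSeries.coeff_C, PowerSeries.coeff_derivative, sq,
      PowerSeries.coeff_mul, Finset.Nat.sum_antidiagonal_eq_sum_range_succ_mk]
    by_cases hn : n % 2 = 1
    · rw [hAcoeff, if_neg (by omega)]
      have hz : ∑ k ∈ Finset.range (n + 1),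
          PowerSeries.coeff k PA * PowerSeries.coeff (n - k) PA = 0 := by
        refine Finset.sum_eq_zero fun k hk => ?_
        have hk' : k < n + 1 := Finset.mem_range.mp hk
        by_cases hke : k % 2 = 1
        · rw [hAcoeff (n - k), if_neg (by omega), mul_zero]
        · rw [hAcoeff k, if_neg (by omega), zero_mul]
      rw [hz, if_neg (by omega)]
      ring
    · obtain ⟨m, rfl⟩ : ∃ m, n = 2 * m := ⟨n / 2, by omega⟩
      have e1 : (2 * m + 1 - 1) / 2 = m := by omega
      have e2 : (2 * m + 1 + 1) / 2 = m + 1 := by omega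
      rw [hAcoeff, if_pos (by omega), e1, e2]
      rw [sum_range_odd' (fun k => PowerSeries.coeff k PA * PowerSeries.coeff (2 * m - k) PA) m
        (fun k hk => by
          show PowerSeries.coeff k PA * PowerSeries.coeff (2 * m - k) PA = 0
          rw [hAcoeff k, if_neg (by omega), zero_mul])]
      rcases Nat.eq_zero_or_pos m with hm | hm
      · subst hm
        simp [ht1, Nat.factorial]
      · have hsum : ∀ j ∈ Finset.range m,
            PowerSeries.coeff (2 * j + 1) PA * PowerSeries.coeff (2 * m - (2 * j + 1)) PA
            = (-1 : ℚ) ^ (m + 1) *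
              ((Nat.choose (2 * m) (2 * j + 1) : ℚ) * t (j + 1) * t (m - j)) /
              (Nat.factorial (2 * m) : ℚ) := by
          intro j hj
          have hjm : j < m := Finset.mem_range.mp hj
          have e3 : 2 * m - (2 * j + 1) = 2 * (m - 1 - j) + 1 := by omega
          rw [e3, hAcoeff, hAcoeff, if_pos (by omega), if_pos (by omega)]
          have e4 : (2 * j + 1 - 1) / 2 = j := by omega
          have e5 : (2 * j + 1 + 1) / 2 = j + 1 := by omega
          have e6 : (2 * (m - 1 - j) + 1 - 1) / 2 = m - 1 - j := by omega
          have e7 : (2 * (m - 1 - j) + 1 + 1) / 2 = m - j := by omega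
          rw [e4, e5, e6, e7]
          have hsign : (-1 : ℚ) ^ j * (-1) ^ (m - 1 - j) = (-1) ^ (m + 1) := by
            rw [← pow_add, show j + (m - 1 - j) = m - 1 from by omega,
              show m + 1 = (m - 1) + 2 from by omega, pow_add]
            norm_num
          rw [Nat.cast_choose ℚ (show 2 * j + 1 ≤ 2 * m by omega),
            show 2 * m - (2 * j + 1) = 2 * (m - 1 - j) + 1 from by omega]
          rw [← hsign]
          field_simp
        rw [Finset.sum_congr rfl hsum, ← Finset.sum_div, ← Finset.mul_sum]
        have htm := ht (m + 1) (by omega)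
        rw [show 2 * (m + 1) - 2 = 2 * m from by omega, show m + 1 - 1 = m from rfl,
          sum_Icc_one'] at htm
        have htm' : ∑ j ∈ Finset.range m,
            (Nat.choose (2 * m) (2 * j + 1) : ℚ) * t (j + 1) * t (m - j) = 2 * t (m + 1) := by
          have htm'' : ∑ j ∈ Finset.range m,
              (Nat.choose (2 * m) (2 * (j + 1) - 1) : ℚ) * t (j + 1) * t (m + 1 - (j + 1))
              = ∑ j ∈ Finset.range m,
              (Nat.choose (2 * m) (2 * j + 1) : ℚ) * t (j + 1) * t (m - j) :=
            Finset.sum_congr rfl (fun j hj => by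
              rw [show 2 * (j + 1) - 1 = 2 * j + 1 from by omega,
                show m + 1 - (j + 1) = m - j from by omega])
          rw [htm, htm'']
          ring
        rw [htm', if_neg (by omega)]
        rw [Nat.factorial_succ (2 * m)]
        have h1 := fact_ne (2 * m)
        push_cast
        field_simp
        ring
  -- the S equation : S' = S * A
  have hSeq : d⁄dX ℚ PS = PS * PA := by
    ext n
    rw [PowerSeries.coeff_derivative, PowerSeries.coeff_mul,
      Finset.Nat.sum_antidiagonal_eq_sum_range_succ_mk]
    by_cases hn : n % 2 = 0
    · rw [hScoeff, if_neg (by omega), zero_mul]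
      refine (Finset.sum_eq_zero fun k hk => ?_).symm
      have hk' : k < n + 1 := Finset.mem_range.mp hk
      by_cases hke : k % 2 = 0
      · rw [hAcoeff (n - k), if_neg (by omega), mul_zero]
      · rw [hScoeff k, if_neg (by omega), zero_mul]
    · obtain ⟨m, rfl⟩ : ∃ m, n = 2 * m + 1 := ⟨n / 2, by omega⟩
      rw [hScoeff, if_pos (by omega), show (2 * m + 1 + 1) / 2 = m + 1 from by omega]
      rw [show Nat.succ (2 * m + 1) = 2 * (m + 1) from by omega]
      rw [show 2 * m + 1 + 1 = 2 * (m + 1) from by ring]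
      rw [sum_range_even' (fun k => PowerSeries.coeff k PS * PowerSeries.coeff (2 * m + 1 - k) PA)
        (m + 1) (fun k hk => by
          show PowerSeries.coeff k PS * PowerSeries.coeff (2 * m + 1 - k) PA = 0
          rw [hScoeff k, if_neg (by omega), zero_mul])]
      have hsum : ∀ j ∈ Finset.range (m + 1),
          PowerSeries.coeff (2 * j) PS * PowerSeries.coeff (2 * m + 1 - 2 * j) PA
          = -((Nat.choose (2 * m + 1) (2 * j) : ℚ) * s j * (-1) ^ (m + 1 - j) * t (m + 1 - j)) /
            (Nat.factorial (2 * m + 1) : ℚ) := by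
        intro j hj
        have hjm : j < m + 1 := Finset.mem_range.mp hj
        have e3 : 2 * m + 1 - 2 * j = 2 * (m - j) + 1 := by omega
        rw [e3, hScoeff, hAcoeff, if_pos (by omega), if_pos (by omega)]
        rw [show (2 * j) / 2 = j from by omega,
          show (2 * (m - j) + 1 - 1) / 2 = m - j from by omega,
          show (2 * (m - j) + 1 + 1) / 2 = m - j + 1 from by omega,
          show m - j + 1 = m + 1 - j from by omega]
        have hsign : (-1 : ℚ) ^ (m - j) = -(-1 : ℚ) ^ (m + 1 - j) := by
          rw [show m + 1 - j = (m - j) + 1 from by omega, pow_succ]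
          ring
        rw [Nat.cast_choose ℚ (show 2 * j ≤ 2 * m + 1 by omega),
          show 2 * m + 1 - 2 * j = 2 * (m - j) + 1 from by omega, hsign]
        field_simp
      rw [Finset.sum_congr rfl hsum]
      have hsi := hs (m + 1) (by omega)
      rw [show 2 * (m + 1) - 1 = 2 * m + 1 from by omega] at hsi
      have : ∑ j ∈ Finset.range (m + 1),
          -((Nat.choose (2 * m + 1) (2 * j) : ℚ) * s j * (-1) ^ (m + 1 - j) * t (m + 1 - j)) /
            (Nat.factorial (2 * m + 1) : ℚ)
          = s (m + 1) / (Nat.factorial (2 * m + 1) : ℚ) := by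
        rw [← Finset.sum_div, Finset.sum_neg_distrib, ← hsi]
      rw [this, show 2 * (m + 1) = (2 * m + 1) + 1 from by omega, Nat.factorial_succ (2 * m + 1)]
      have h1 := fact_ne (2 * m + 1)
      push_cast
      field_simp
  -- C' = B and B' = 2 C
  have hCeq : d⁄dX ℚ PC = PB := by
    ext n
    rw [PowerSeries.coeff_derivative, hCcoeff, hBcoeff]
    by_cases hn : n % 2 = 0
    · rw [if_neg (by omega), if_neg (by omega), zero_mul]
    · rw [if_pos (by omega), if_pos (by omega), Nat.factorial_succ]
      have h1 := fact_ne n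
      have h2 : ((n : ℚ) + 1) ≠ 0 := by positivity
      push_cast
      field_simp
  have hBeq : d⁄dX ℚ PB = 2 * PC := by
    ext n
    rw [show (2 : ℚ⟦X⟧) = PowerSeries.C (R := ℚ) 2 from (map_ofNat _ 2).symm,
      PowerSeries.coeff_C_mul, PowerSeries.coeff_derivative, hBcoeff, hCcoeff]
    by_cases hn : n % 2 = 0
    · rw [if_pos (by omega), if_pos (by omega), Nat.factorial_succ,
        show (n + 1 + 1) / 2 = n / 2 + 1 from by omega, pow_succ]
      have h1 := fact_ne n
      have h2 : ((n : ℚ) + 1) ≠ 0 := by positivity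
      push_cast
      field_simp
    · rw [if_neg (by omega), if_neg (by omega), zero_mul, mul_zero]
  -- constant coefficients
  have cA : PowerSeries.coeff 0 PA = 0 := by rw [hAcoeff]; norm_num
  have cB : PowerSeries.coeff 0 PB = 0 := by rw [hBcoeff]; norm_num
  have cC : PowerSeries.coeff 0 PC = 1 := by rw [hCcoeff]; norm_num
  have cS : PowerSeries.coeff 0 PS = 1 := by rw [hScoeff]; norm_num [hs0]
  have hA2' : 2 * d⁄dX ℚ PA = 2 - PA ^ 2 := by rw [hA2, hC2]
  have hD2 : d⁄dX ℚ (2 : ℚ⟦X⟧) = 0 := by rw [← hC2, derivative_C]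
  have coeff0_mul : ∀ f g : ℚ⟦X⟧, PowerSeries.coeff 0 (f * g) =
      PowerSeries.coeff 0 f * PowerSeries.coeff 0 g := by
    intro f g
    simp [PowerSeries.coeff_zero_eq_constantCoeff, map_mul]
  -- the system
  have hW' : 2 * d⁄dX ℚ (PB - (1 + PC) * PA) =
      (-(2 * PA)) * (PB - (1 + PC) * PA) + 1 * (2 * (PC - 1) - (1 + PC) * PA ^ 2) := by
    have hDW : d⁄dX ℚ (PB - (1 + PC) * PA) =
        d⁄dX ℚ PB - ((1 + PC) * d⁄dX ℚ PA + PA * d⁄dX ℚ PC) := by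
      simp only [map_sub, Derivation.leibniz, smul_eq_mul, map_add,
        Derivation.map_one_eq_zero, zero_add, mul_zero, add_zero, zero_mul]
    rw [hDW]
    linear_combination 2 * hBeq - (1 + PC) * hA2' - 2 * PA * hCeq
  have hV' : d⁄dX ℚ (2 * (PC - 1) - (1 + PC) * PA ^ 2) =
      (2 - PA ^ 2) * (PB - (1 + PC) * PA) + 0 * (2 * (PC - 1) - (1 + PC) * PA ^ 2) := by
    have hDV : d⁄dX ℚ (2 * (PC - 1) - (1 + PC) * PA ^ 2) =
        2 * d⁄dX ℚ PC - ((1 + PC) * (PA * d⁄dX ℚ PA + PA * d⁄dX ℚ PA) + PA ^ 2 * d⁄dX ℚ PC) := by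
      simp only [pow_two, map_sub, Derivation.leibniz, smul_eq_mul, map_add,
        Derivation.map_one_eq_zero, hD2, zero_add, add_zero, mul_zero, zero_mul, sub_zero]
    rw [hDV]
    linear_combination (-((1 + PC) * PA)) * hA2' + (2 - PA ^ 2) * hCeq
  have hW0 : PowerSeries.coeff 0 (PB - (1 + PC) * PA) = 0 := by
    rw [map_sub, coeff0_mul, map_add, cA, cB, mul_zero, sub_zero]
  have hV0 : PowerSeries.coeff 0 (2 * (PC - 1) - (1 + PC) * PA ^ 2) = 0 := by
    rw [map_sub, show (2 : ℚ⟦X⟧) * (PC - 1) = PC + PC - 2 from by ring, pow_two, map_sub,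
      map_add, coeff0_mul, coeff0_mul, cA, cC]
    rw [show ((2 : ℚ⟦X⟧)) = PowerSeries.C (R := ℚ) 2 from hC2.symm, PowerSeries.coeff_C]
    norm_num
  obtain ⟨hWzero, -⟩ := sys_zero (-(2 * PA)) 1 (2 - PA ^ 2) 0 (PB - (1 + PC) * PA)
    (2 * (PC - 1) - (1 + PC) * PA ^ 2) hW' hV' hW0 hV0
  have hBC : PB = (1 + PC) * PA := sub_eq_zero.mp hWzero
  -- uniqueness : 2S = 1 + C
  have hZ : 2 * d⁄dX ℚ (2 * PS - (1 + PC)) =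
      (2 * PA) * (2 * PS - (1 + PC)) + 0 * 0 := by
    have hDZ : d⁄dX ℚ (2 * PS - (1 + PC)) = 2 * d⁄dX ℚ PS - d⁄dX ℚ PC := by
      simp only [map_sub, Derivation.leibniz, smul_eq_mul, map_add,
        Derivation.map_one_eq_zero, hD2, zero_add, add_zero, mul_zero, zero_mul, sub_zero]
    rw [hDZ]
    linear_combination 4 * hSeq - 2 * hCeq - 2 * hBC
  have hZV : d⁄dX ℚ (0 : ℚ⟦X⟧) = 0 * (2 * PS - (1 + PC)) + 0 * 0 := by simp
  have hZ0 : PowerSeries.coeff 0 (2 * PS - (1 + PC)) = 0 := by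
    rw [map_sub, map_add, cC, show ((2 : ℚ⟦X⟧)) * PS = PS + PS from by ring, map_add, cS]
    rw [show (1 : ℚ⟦X⟧) = PowerSeries.C (R := ℚ) 1 from (map_one _).symm, PowerSeries.coeff_C]
    norm_num
  obtain ⟨hZzero, -⟩ := sys_zero (2 * PA) 0 0 0 (2 * PS - (1 + PC)) 0 hZ hZV hZ0 (map_zero _)
  have hfin : 2 * PS = 1 + PC := sub_eq_zero.mp hZzero
  -- conclusion
  intro i hi
  obtain ⟨k, rfl⟩ : ∃ k, i = k + 1 := ⟨i - 1, by omega⟩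
  have h1 := congrArg (PowerSeries.coeff (2 * (k + 1))) hfin
  rw [show ((2 : ℚ⟦X⟧)) * PS = PS + PS from by ring, map_add, map_add, hScoeff, hCcoeff,
    if_pos (by omega), if_pos (by omega), show (2 * (k + 1)) / 2 = k + 1 from by omega,
    PowerSeries.coeff_one, if_neg (by omega)] at h1
  have h2 := fact_ne (2 * (k + 1))
  rw [show k + 1 - 1 = k from rfl]
  have h3 : (2 : ℚ) ^ (k + 1) = 2 * 2 ^ k := by ring
  field_simp at h1
  nlinarith [h1, h3]
end

section
/- Let v_{i,k} be the coefficients of powers of the companion matrix (M^k = Σ_{i=1}^N v_{i,k} M^{N-i}). For every k with N ≤ k ≤ 2N, one has v_{i,k} = Σ_{a,b} w_a·w_b + (terms with at least 3 factors), where the sum runs over pairs a,b ∈ {0,…,N} with a+b = i+k-N and b ≤ k-N, using the convention w_0 := -1. -/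
open MvPolynomial

namespace CompanionQuadAux

open Finset

/-- Minimum total degree at least `n`. -/
def Pge {N : ℕ} (n : ℕ) (p : MvPolynomial (Fin N) ℝ) : Prop :=
  ∀ d ∈ p.support, n ≤ d.sum fun _ e => e

lemma Pge.zero {N : ℕ} (n : ℕ) : Pge (N := N) n 0 := by
  intro d hd; simp at hd

lemma Pge.add {N n : ℕ} {p q : MvPolynomial (Fin N) ℝ} (hp : Pge n p) (hq : Pge n q) :
    Pge n (p + q) := by
  intro d hd
  rcases Finset.mem_union.mp (MvPolynomial.support_add hd) with h | h
  exacts [hp d h, hq d h]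

lemma Pge.neg {N n : ℕ} {p : MvPolynomial (Fin N) ℝ} (hp : Pge n p) : Pge n (-p) := by
  intro d hd
  rw [MvPolynomial.support_neg] at hd
  exact hp d hd

lemma Pge.mul {N a b : ℕ} {p q : MvPolynomial (Fin N) ℝ} (hp : Pge a p) (hq : Pge b q) :
    Pge (a + b) (p * q) := by
  intro d hd
  obtain ⟨u, hu, w, hw, rfl⟩ := Finset.mem_add.mp (MvPolynomial.support_mul _ _ hd)
  rw [Finsupp.sum_add_index' (fun _ => rfl) (fun _ _ _ => rfl)]
  exact add_le_add (hp u hu) (hq w hw)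

lemma Pge.mono {N a b : ℕ} {p : MvPolynomial (Fin N) ℝ} (h : b ≤ a) (hp : Pge a p) :
    Pge b p := fun d hd => le_trans h (hp d hd)

lemma Pge.X {N : ℕ} (i : Fin N) : Pge 1 (MvPolynomial.X (R := ℝ) i) := by
  intro d hd
  rw [MvPolynomial.support_X] at hd
  simp at hd
  subst hd
  simp

lemma Pge.sum {N n : ℕ} {s : Finset ℕ} {f : ℕ → MvPolynomial (Fin N) ℝ}
    (h : ∀ b ∈ s, Pge n (f b)) : Pge n (∑ b ∈ s, f b) := by
  classical
  induction s using Finset.induction_on with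
  | empty => simpa using Pge.zero n
  | @insert _ _ hx ih =>
    rw [Finset.sum_insert hx]
    exact (h _ (Finset.mem_insert_self _ _)).add (ih fun b hb => h b (Finset.mem_insert_of_mem hb))

lemma sum_fin_ite {R : Type*} [AddCommMonoid R] (N c : ℕ) (g : Fin N → R) :
    (∑ j : Fin N, if (j : ℕ) = c then g j else 0) = if h : c < N then g ⟨c, h⟩ else 0 := by
  split_ifs with h
  · have : ∀ j : Fin N, ((j : ℕ) = c) = (j = ⟨c, h⟩) := fun j => by simp [Fin.ext_iff]
    simp_rw [this]
    simp [Finset.sum_ite_eq' Finset.univ (⟨c, h⟩ : Fin N) g]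
  · exact Finset.sum_eq_zero fun j _ => if_neg (by omega)

variable (N : ℕ) (hN : 0 < N) (M : Matrix (Fin N) (Fin N) (MvPolynomial (Fin N) ℝ))
    (hM : ∀ i j : Fin N, M i j =
      if (j : ℕ) = 0 then -X i else if (j : ℕ) = (i : ℕ) + 1 then 1 else 0)
    (v : Fin N → ℕ → MvPolynomial (Fin N) ℝ)
    (hv : ∀ k : ℕ, M ^ k = ∑ i : Fin N, v i k • M ^ (N - 1 - (i : ℕ)))
    (W : ℕ → MvPolynomial (Fin N) ℝ)
    (hW : ∀ a : ℕ, W a =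
      if a = 0 then -1 else if h : a - 1 < N then X ⟨a - 1, h⟩ else 0)

include hN hM in
lemma entry_pow :
    ∀ p, p ≤ N - 1 → ∀ r : Fin N, (M ^ p) r ⟨N - 1, by omega⟩ =
      if (r : ℕ) + p = N - 1 then 1 else 0 := by
  intro p
  induction p with
  | zero => intro _ r; simp [Matrix.one_apply, Fin.ext_iff]
  | succ p ih =>
    intro hp r
    rw [pow_succ', Matrix.mul_apply]
    have h1 : ∀ j : Fin N, M r j * (M ^ p) j ⟨N - 1, by omega⟩ =
        if (j : ℕ) = N - 1 - p then M r j else 0 := by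
      intro j
      rw [ih (by omega) j]
      by_cases hj : (j : ℕ) + p = N - 1
      · rw [if_pos hj, if_pos (by omega), mul_one]
      · rw [if_neg hj, if_neg (by omega), mul_zero]
    simp_rw [h1]
    rw [sum_fin_ite, dif_pos (by omega : N - 1 - p < N), hM]
    simp only
    rw [if_neg (by omega)]
    by_cases hr : (r : ℕ) + (p + 1) = N - 1
    · rw [if_pos (by omega), if_pos hr]
    · rw [if_neg (by omega), if_neg hr]

include hN hM hv in
lemma v_eq_entry : ∀ k (i : Fin N), v i k = (M ^ k) i ⟨N - 1, by omega⟩ := by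
  intro k i
  have h := congrFun (congrFun (hv k) i) ⟨N - 1, by omega⟩
  rw [Matrix.sum_apply] at h
  have h2 : ∀ j : Fin N, (v j k • M ^ (N - 1 - (j : ℕ))) i ⟨N - 1, by omega⟩ =
      if (j : ℕ) = (i : ℕ) then v j k else 0 := by
    intro j
    have hjN := j.2
    have hiN := i.2
    rw [Matrix.smul_apply, smul_eq_mul, entry_pow N hN M hM _ (by omega)]
    by_cases hj : (i : ℕ) + (N - 1 - (j : ℕ)) = N - 1
    · rw [if_pos hj, mul_one, if_pos (by omega)]
    · rw [if_neg hj, mul_zero, if_neg (by omega)]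
  simp_rw [h2] at h
  rw [sum_fin_ite, dif_pos i.isLt] at h
  simp only [Fin.eta] at h
  exact h.symm

include hN hM hv in
lemma v_rec : ∀ k (i : Fin N), v i (k + 1) =
    (-X i) * v ⟨0, hN⟩ k +
      (if h : (i : ℕ) + 1 < N then v ⟨(i : ℕ) + 1, h⟩ k else 0) := by
  intro k i
  rw [v_eq_entry N hN M hM v hv, pow_succ', Matrix.mul_apply]
  have h1 : ∀ j : Fin N, M i j * (M ^ k) j ⟨N - 1, by omega⟩ =
      (if (j : ℕ) = 0 then (-X i) * v j k else 0) +
      (if (j : ℕ) = (i : ℕ) + 1 then v j k else 0) := by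
    intro j
    rw [← v_eq_entry N hN M hM v hv, hM]
    by_cases hj0 : (j : ℕ) = 0
    · rw [if_pos hj0, if_pos hj0, if_neg (by omega), add_zero]
    · rw [if_neg hj0, if_neg hj0]
      by_cases hj1 : (j : ℕ) = (i : ℕ) + 1
      · rw [if_pos hj1, if_pos hj1, one_mul, zero_add]
      · rw [if_neg hj1, if_neg hj1, zero_mul, add_zero]
  simp_rw [h1]
  rw [Finset.sum_add_distrib, sum_fin_ite, sum_fin_ite, dif_pos hN]

include hN hM hv in
lemma v_base : ∀ i : Fin N, v i N = -X i := by
  obtain ⟨n, rfl⟩ : ∃ n, N = n + 1 := ⟨N - 1, by omega⟩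
  intro i
  have hvv : ∀ j : Fin (n + 1), v j n = if (j : ℕ) + n = n then 1 else 0 := by
    intro j
    rw [v_eq_entry _ hN M hM v hv]
    simpa using entry_pow (n + 1) hN M hM n (by omega) j
  rw [v_rec _ hN M hM v hv, hvv, if_pos (by simp), mul_one]
  rcases Nat.lt_or_ge ((i : ℕ) + 1) (n + 1) with h | h
  · rw [dif_pos h, hvv, if_neg (by simp), add_zero]
  · rw [dif_neg (by omega), add_zero]

include hW in
lemma hW0 : W 0 = -1 := by rw [hW]; simp

include hW in
lemma hWX : ∀ i : Fin N, W ((i : ℕ) + 1) = X i := by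
  intro i
  rw [hW, if_neg (by omega), dif_pos (by simp only [Nat.add_sub_cancel]; exact i.isLt)]
  simp

include hW in
lemma hWz : ∀ a, N + 1 ≤ a → W a = 0 := by
  intro a ha
  rw [hW, if_neg (by omega), dif_neg (by omega)]

include hW in
lemma hW1 : ∀ a, 1 ≤ a → Pge 1 (W a) := by
  intro a ha
  rw [hW, if_neg (by omega)]
  split_ifs
  · exact Pge.X _
  · exact Pge.zero 1

lemma filter_sum_eq (i m : ℕ) (hm : m ≤ N) (hWz' : ∀ a, N + 1 ≤ a → W a = 0) :
    (∑ q ∈ ((Finset.range (N + 1)) ×ˢ (Finset.range (N + 1))).filter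
        (fun q => q.1 + q.2 + N = i + 1 + (N + m) ∧ q.2 + N ≤ N + m),
      W q.1 * W q.2)
    = ∑ b ∈ Finset.range (m + 1), W (i + 1 + m - b) * W b := by
  rw [Finset.sum_filter, Finset.sum_product_right]
  have step1 : ∀ b ∈ Finset.range (N + 1),
      (∑ a ∈ Finset.range (N + 1),
        if a + b + N = i + 1 + (N + m) ∧ b + N ≤ N + m then W a * W b else 0)
      = if b ≤ m then W (i + 1 + m - b) * W b else 0 := by
    intro b _
    by_cases hb : b ≤ m
    · rw [if_pos hb]
      have hcond : ∀ a, (a + b + N = i + 1 + (N + m) ∧ b + N ≤ N + m) ↔ a = i + 1 + m - b := by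
        intro a; omega
      simp_rw [hcond]
      rw [Finset.sum_ite_eq' (Finset.range (N + 1)) (i + 1 + m - b) (fun a => W a * W b)]
      by_cases hc : i + 1 + m - b ∈ Finset.range (N + 1)
      · rw [if_pos hc]
      · rw [if_neg hc, hWz' _ (by simp at hc; omega), zero_mul]
    · rw [if_neg hb]
      exact Finset.sum_eq_zero fun a _ => if_neg (by omega)
  rw [Finset.sum_congr rfl step1]
  rw [← Finset.sum_subset (Finset.range_mono (by omega : m + 1 ≤ N + 1))
      (fun b _ hb => if_neg (by simp at hb ⊢; omega))]
  exact Finset.sum_congr rfl fun b hb => if_pos (by simp at hb; omega)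

include hW in
lemma main_ind
    (hbase : ∀ i : Fin N, v i N = -X i)
    (hrec : ∀ k (i : Fin N), v i (k + 1) =
      (-X i) * v ⟨0, hN⟩ k + (if h : (i : ℕ) + 1 < N then v ⟨(i : ℕ) + 1, h⟩ k else 0)) :
    ∀ m, m ≤ N → ∀ i : Fin N, ∃ E : MvPolynomial (Fin N) ℝ, Pge 3 E ∧
    v i (N + m) = (∑ b ∈ Finset.range (m + 1), W ((i : ℕ) + 1 + m - b) * W b) + E := by
  intro m
  induction m with
  | zero =>
    intro _ i
    refine ⟨0, Pge.zero 3, ?_⟩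
    simp only [Nat.add_zero]
    rw [hbase i, Finset.sum_range_one]
    simp only [Nat.sub_zero]
    rw [hWX N W hW, hW0 N W hW]
    ring
  | succ m ih =>
    intro hm1 i
    have hm : m ≤ N := by omega
    obtain ⟨E0, hE0, h0⟩ := ih hm ⟨0, hN⟩
    set Q : MvPolynomial (Fin N) ℝ := ∑ b ∈ Finset.range m, W (m - b) * W (b + 1) with hQdef
    have hQ : Pge 2 Q := Pge.sum fun b hb =>
      Pge.mul (hW1 N W hW _ (by simp at hb; omega)) (hW1 N W hW _ (by omega))
    have hsplit : v ⟨0, hN⟩ (N + m) = -(W (m + 1)) + (Q + E0) := by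
      rw [h0, Finset.sum_range_succ']
      have e1 : ∀ b ∈ Finset.range m,
          W ((⟨0, hN⟩ : Fin N) + 1 + m - (b + 1)) * W (b + 1) = W (m - b) * W (b + 1) := by
        intro b hb
        rw [show ((⟨0, hN⟩ : Fin N) : ℕ) + 1 + m - (b + 1) = m - b from by
          simp only [Fin.val_mk]; simp at hb; omega]
      rw [Finset.sum_congr rfl e1,
        show ((⟨0, hN⟩ : Fin N) : ℕ) + 1 + m - 0 = m + 1 from by
          simp only [Fin.val_mk]; omega,
        hW0 N W hW, mul_neg_one]
      ring
    rw [show N + (m + 1) = (N + m) + 1 from rfl]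
    by_cases h : (i : ℕ) + 1 < N
    · obtain ⟨E1, hE1, h1⟩ := ih hm ⟨(i : ℕ) + 1, h⟩
      refine ⟨(-X i) * Q + (-X i) * E0 + E1, ?_, ?_⟩
      · exact (((Pge.X i).neg.mul hQ).add (Pge.mono (by omega) ((Pge.X i).neg.mul hE0))).add hE1
      · rw [hrec (N + m) i, dif_pos h, hsplit, h1,
          Finset.sum_range_succ (fun b => W ((i : ℕ) + 1 + (m + 1) - b) * W b) (m + 1)]
        have e2 : ∀ b ∈ Finset.range (m + 1),
            W ((i : ℕ) + 1 + (m + 1) - b) * W b =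
            W (((⟨(i : ℕ) + 1, h⟩ : Fin N) : ℕ) + 1 + m - b) * W b := by
          intro b hb
          simp only [Fin.val_mk]
          rw [show (i : ℕ) + 1 + (m + 1) - b = (i : ℕ) + 1 + 1 + m - b from by omega]
        rw [Finset.sum_congr rfl e2,
          show (i : ℕ) + 1 + (m + 1) - (m + 1) = (i : ℕ) + 1 from by omega,
          hWX N W hW]
        ring
    · refine ⟨(-X i) * Q + (-X i) * E0, ?_, ?_⟩
      · exact ((Pge.X i).neg.mul hQ).add (Pge.mono (by omega) ((Pge.X i).neg.mul hE0))
      · rw [hrec (N + m) i, dif_neg h, hsplit,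
          Finset.sum_range_succ (fun b => W ((i : ℕ) + 1 + (m + 1) - b) * W b) (m + 1)]
        have e3 : (∑ b ∈ Finset.range (m + 1), W ((i : ℕ) + 1 + (m + 1) - b) * W b) = 0 := by
          apply Finset.sum_eq_zero
          intro b hb
          rw [hWz N W hW _ (by simp at hb; have := i.isLt; omega), zero_mul]
        rw [e3, show (i : ℕ) + 1 + (m + 1) - (m + 1) = (i : ℕ) + 1 from by omega,
          hWX N W hW]
        ring

end CompanionQuadAux

/-- Let `v_{i,k}` be the coefficients of powers of the companion matrix
(`M^k = ∑_{i=1}^N v_{i,k} M^{N-i}`, over `ℝ[w_1,…,w_N]`).  For every `k` with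
`N ≤ k ≤ 2N`, one has `v_{i,k} = ∑_{a,b} w_a·w_b + (terms with at least 3 factors)`,
where the sum runs over pairs `a,b ∈ {0,…,N}` with `a+b = i+k-N` and `b ≤ k-N`, with
the convention `w_0 := -1`.  Below `i : Fin N` represents the `1`-based index `i+1`,
and the index conditions are written without natural subtraction. -/
theorem companion_power_coefficients_quadratic_part (N : ℕ) (hN : 0 < N)
    (M : Matrix (Fin N) (Fin N) (MvPolynomial (Fin N) ℝ))
    (hM : ∀ i j : Fin N, M i j =
      if (j : ℕ) = 0 then -X i else if (j : ℕ) = (i : ℕ) + 1 then 1 else 0)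
    (v : Fin N → ℕ → MvPolynomial (Fin N) ℝ)
    (hv : ∀ k : ℕ, M ^ k = ∑ i : Fin N, v i k • M ^ (N - 1 - (i : ℕ)))
    (W : ℕ → MvPolynomial (Fin N) ℝ)
    (hW : ∀ a : ℕ, W a =
      if a = 0 then -1 else if h : a - 1 < N then X ⟨a - 1, h⟩ else 0) :
    ∀ k : ℕ, N ≤ k → k ≤ 2 * N → ∀ i : Fin N,
      ∃ E : MvPolynomial (Fin N) ℝ,
        (∀ d ∈ E.support, 3 ≤ d.sum fun _ e => e) ∧
        v i k =
          (∑ q ∈ ((Finset.range (N + 1)) ×ˢ (Finset.range (N + 1))).filter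
              (fun q => q.1 + q.2 + N = (i : ℕ) + 1 + k ∧ q.2 + N ≤ k),
            W q.1 * W q.2) + E := by
  intro k hk1 hk2 i
  obtain ⟨m, rfl⟩ : ∃ m, k = N + m := ⟨k - N, by omega⟩
  obtain ⟨E, hE, hvE⟩ :=
    CompanionQuadAux.main_ind N hN v W hW
      (CompanionQuadAux.v_base N hN M hM v hv)
      (CompanionQuadAux.v_rec N hN M hM v hv)
      m (by omega) i
  refine ⟨E, hE, ?_⟩
  rw [CompanionQuadAux.filter_sum_eq N W (i : ℕ) m (by omega)
    (CompanionQuadAux.hWz N W hW)]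
  exact hvE
end

section
/- Let v_{i,k} be the coefficients of powers of the companion matrix (M^k = Σ_{i=1}^N v_{i,k} M^{N-i}). For every k with 2N ≤ k ≤ 3N and every i ≤ 3N - k, one has v_{i,k} = Σ_{a+b = i+k-N, 1≤a,b≤N} w_a·w_b + (terms of total degree at least 3 in w_1,…,w_N). -/
open MvPolynomial

/-- helper: every monomial of `p` has degree ≥ n -/
private def Mdeg {σ : Type*} (n : ℕ) (p : MvPolynomial σ ℝ) : Prop :=
  ∀ d ∈ p.support, n ≤ d.sum fun _ e => e

private lemma mdeg_zero {σ : Type*} (n : ℕ) : Mdeg n (0 : MvPolynomial σ ℝ) := by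
  simp [Mdeg]

private lemma mdeg_mono {σ : Type*} {n m : ℕ} {p : MvPolynomial σ ℝ}
    (h : Mdeg n p) (hmn : m ≤ n) : Mdeg m p :=
  fun d hd => hmn.trans (h d hd)

private lemma mdeg_add {σ : Type*} {n : ℕ} {p q : MvPolynomial σ ℝ}
    (hp : Mdeg n p) (hq : Mdeg n q) : Mdeg n (p + q) := by
  classical
  intro d hd
  rcases Finset.mem_union.mp (MvPolynomial.support_add hd) with h | h
  · exact hp d h
  · exact hq d h

private lemma mdeg_neg {σ : Type*} {n : ℕ} {p : MvPolynomial σ ℝ}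
    (hp : Mdeg n p) : Mdeg n (-p) := by
  intro d hd
  rw [MvPolynomial.support_neg] at hd
  exact hp d hd

private lemma mdeg_mul {σ : Type*} {n m : ℕ} {p q : MvPolynomial σ ℝ}
    (hp : Mdeg n p) (hq : Mdeg m q) : Mdeg (n + m) (p * q) := by
  classical
  intro d hd
  rcases Finset.mem_add.mp (MvPolynomial.support_mul p q hd) with ⟨a, ha, b, hb, rfl⟩
  rw [Finsupp.sum_add_index' (fun _ => rfl) (fun _ _ _ => rfl)]
  exact Nat.add_le_add (hp a ha) (hq b hb)

private lemma mdeg_X {σ : Type*} {n : ℕ} (i : σ) (hn : n ≤ 1) :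
    Mdeg n (X i : MvPolynomial σ ℝ) := by
  intro d hd
  rw [MvPolynomial.support_X, Finset.mem_singleton] at hd
  subst hd
  simpa using hn.trans (by simp)

private lemma mdeg_sum {σ ι : Type*} {n : ℕ} (s : Finset ι) (f : ι → MvPolynomial σ ℝ)
    (h : ∀ i ∈ s, Mdeg n (f i)) : Mdeg n (∑ i ∈ s, f i) := by
  classical
  induction s using Finset.induction_on with
  | empty => simpa using mdeg_zero n
  | insert _ _ hx ih =>
    rename_i a s
    rw [Finset.sum_insert hx]
    exact mdeg_add (h a (Finset.mem_insert_self a s))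
      (ih fun i hi => h i (Finset.mem_insert_of_mem hi))

private lemma sum_mulVec {R : Type*} [CommRing R] {n : ℕ} {ι : Type*} (s : Finset ι)
    (A : ι → Matrix (Fin n) (Fin n) R) (u : Fin n → R) :
    (∑ i ∈ s, A i).mulVec u = ∑ i ∈ s, (A i).mulVec u := by
  classical
  induction s using Finset.induction_on with
  | empty => simp [Matrix.zero_mulVec]
  | insert _ _ hx ih =>
    rename_i a s
    rw [Finset.sum_insert hx, Finset.sum_insert hx, Matrix.add_mulVec, ih]

/-- Let `v_{i,k}` be the coefficients of powers of the companion matrix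
(`M^k = ∑_{i=1}^N v_{i,k} M^{N-i}`, over `ℝ[w_1,…,w_N]`).  For every `k` with
`2N ≤ k ≤ 3N` and every `i ≤ 3N - k`, one has
`v_{i,k} = ∑_{a+b = i+k-N, 1≤a,b≤N} w_a·w_b + (terms of total degree ≥ 3)`.
Below `i : Fin N` represents the `1`-based index `i+1` and the conditions are written
without natural subtraction. -/
theorem companion_power_coefficients_quadratic_part' (N : ℕ) (hN : 0 < N)
    (M : Matrix (Fin N) (Fin N) (MvPolynomial (Fin N) ℝ))
    (hM : ∀ i j : Fin N, M i j =
      if (j : ℕ) = 0 then -X i else if (j : ℕ) = (i : ℕ) + 1 then 1 else 0)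
    (v : Fin N → ℕ → MvPolynomial (Fin N) ℝ)
    (hv : ∀ k : ℕ, M ^ k = ∑ i : Fin N, v i k • M ^ (N - 1 - (i : ℕ)))
    (W : ℕ → MvPolynomial (Fin N) ℝ)
    (hW : ∀ a : ℕ, W a =
      if a = 0 then -1 else if h : a - 1 < N then X ⟨a - 1, h⟩ else 0) :
    ∀ k : ℕ, 2 * N ≤ k → k ≤ 3 * N → ∀ i : Fin N, (i : ℕ) + 1 + k ≤ 3 * N →
      ∃ E : MvPolynomial (Fin N) ℝ,
        (∀ d ∈ E.support, 3 ≤ d.sum fun _ e => e) ∧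
        v i k =
          (∑ q ∈ ((Finset.Icc 1 N) ×ˢ (Finset.Icc 1 N)).filter
              (fun q => q.1 + q.2 + N = (i : ℕ) + 1 + k),
            W q.1 * W q.2) + E := by
  classical
  -- basic facts about W
  have hW0 : W 0 = -1 := by rw [hW]; simp
  have hWX : ∀ a : ℕ, 1 ≤ a → a ≤ N → ∃ h : a - 1 < N, W a = X ⟨a - 1, h⟩ := by
    intro a h1 h2
    have h : a - 1 < N := by omega
    refine ⟨h, ?_⟩
    rw [hW]
    rw [if_neg (by omega), dif_pos h]
  have hWbig : ∀ a : ℕ, N < a → W a = 0 := by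
    intro a ha
    rw [hW, if_neg (by omega), dif_neg (by omega)]
  have hWdeg : ∀ a : ℕ, 1 ≤ a → Mdeg 1 (W a) := by
    intro a ha
    rcases le_or_gt a N with h | h
    · obtain ⟨hh, he⟩ := hWX a ha h
      rw [he]; exact mdeg_X _ le_rfl
    · rw [hWbig a h]; exact mdeg_zero 1
  have hWi : ∀ i : Fin N, W ((i : ℕ) + 1) = X i := by
    intro i
    obtain ⟨hh, he⟩ := hWX ((i : ℕ) + 1) (by omega) (by have := i.isLt; omega)
    rw [he]
    apply congrArg X
    apply Fin.ext
    simp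
  -- mulVec of M
  have hMv : ∀ (u : Fin N → MvPolynomial (Fin N) ℝ) (i : Fin N),
      M.mulVec u i = -X i * u ⟨0, hN⟩ +
        (if h : (i : ℕ) + 1 < N then u ⟨(i : ℕ) + 1, h⟩ else 0) := by
    intro u i
    have key : ∀ j : Fin N, M i j * u j =
        (if j = ⟨0, hN⟩ then -X i * u j else 0) +
        (if h : (i : ℕ) + 1 < N then (if j = ⟨(i : ℕ) + 1, h⟩ then u j else 0) else 0) := by
      intro j
      rw [hM]
      by_cases hj0 : (j : ℕ) = 0
      · have hj : j = ⟨0, hN⟩ := Fin.ext hj0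
        subst hj
        rw [if_pos rfl, if_pos rfl]
        by_cases h : (i : ℕ) + 1 < N
        · have hne : (⟨0, hN⟩ : Fin N) ≠ ⟨(i : ℕ) + 1, h⟩ := by
            simp [Fin.ext_iff]
          rw [dif_pos h, if_neg hne, add_zero]
        · rw [dif_neg h, add_zero]
      · have hne0 : j ≠ ⟨0, hN⟩ := fun hh => hj0 (by rw [hh])
        rw [if_neg hj0]
        by_cases hj1 : (j : ℕ) = (i : ℕ) + 1
        · have h : (i : ℕ) + 1 < N := hj1 ▸ j.isLt
          have hje : j = ⟨(i : ℕ) + 1, h⟩ := Fin.ext hj1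
          rw [if_pos hj1, if_neg hne0, dif_pos h, if_pos hje, one_mul, zero_add]
        · rw [if_neg hj1, if_neg hne0]
          by_cases h : (i : ℕ) + 1 < N
          · have hne1 : j ≠ ⟨(i : ℕ) + 1, h⟩ := fun hh => hj1 (by rw [hh])
            rw [dif_pos h, if_neg hne1, zero_mul, add_zero]
          · rw [dif_neg h, zero_mul, add_zero]
    show (∑ j, M i j * u j) = _
    simp only [key]
    rw [Finset.sum_add_distrib, Finset.sum_ite_eq' Finset.univ (⟨0, hN⟩ : Fin N)]
    rw [if_pos (Finset.mem_univ _)]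
    congr 1
    by_cases h : (i : ℕ) + 1 < N
    · simp only [dif_pos h]
      rw [Finset.sum_ite_eq' Finset.univ (⟨(i : ℕ) + 1, h⟩ : Fin N), if_pos (Finset.mem_univ _)]
    · simp only [dif_neg h, Finset.sum_const_zero]
  -- basis vectors
  set e : ℕ → Fin N → MvPolynomial (Fin N) ℝ :=
    fun s j => if (j : ℕ) = s then 1 else 0 with he
  -- shifting lemma
  have hshift : ∀ m : ℕ, m ≤ N - 1 → (M ^ m).mulVec (e (N - 1)) = e (N - 1 - m) := by
    intro m hm
    induction m with
    | zero => simp [Matrix.one_mulVec]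
    | succ m ih =>
      have hm' : m ≤ N - 1 := by omega
      rw [pow_succ', ← Matrix.mulVec_mulVec, ih hm']
      funext i
      rw [hMv]
      have h1 : N - 1 - m ≠ 0 := by omega
      have h2 : e (N - 1 - m) ⟨0, hN⟩ = 0 := by simp [he, Ne.symm h1]
      rw [h2, mul_zero, zero_add]
      by_cases h : (i : ℕ) + 1 < N
      · simp only [dif_pos h, he]
        by_cases h3 : (i : ℕ) + 1 = N - 1 - m
        · rw [if_pos h3, if_pos (by omega)]
        · rw [if_neg h3, if_neg (by omega)]
      · have hi : (i : ℕ) = N - 1 := by have := i.isLt; omega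
        simp only [dif_neg h, he]
        rw [if_neg (by omega)]
  -- extraction of v from hv
  have hvk : ∀ k : ℕ, ∀ i : Fin N, v i k = (M ^ k).mulVec (e (N - 1)) i := by
    intro k i
    have h1 : (M ^ k).mulVec (e (N - 1)) =
        ∑ j : Fin N, v j k • (M ^ (N - 1 - (j : ℕ))).mulVec (e (N - 1)) := by
      rw [hv k, sum_mulVec]
      congr 1
      funext j
      rw [Matrix.smul_mulVec]
    have h2 : ∀ j : Fin N, (M ^ (N - 1 - (j : ℕ))).mulVec (e (N - 1)) = e (j : ℕ) := by
      intro j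
      rw [hshift _ (by omega)]
      have hj : N - 1 - (N - 1 - (j : ℕ)) = (j : ℕ) := by have := j.isLt; omega
      rw [hj]
    simp only [h2] at h1
    rw [h1]
    rw [Finset.sum_apply]
    have h3 : ∀ j : Fin N, (v j k • e (j : ℕ)) i = if j = i then v j k else 0 := by
      intro j
      simp only [Pi.smul_apply, he, smul_eq_mul]
      by_cases h : (i : ℕ) = (j : ℕ)
      · rw [if_pos h, if_pos (Fin.ext h.symm), mul_one]
      · rw [if_neg h, if_neg (fun he' => h (by rw [he'])), mul_zero]
    simp only [h3]
    rw [Finset.sum_ite_eq' Finset.univ i, if_pos (Finset.mem_univ _)]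
  -- the column vector c m
  set c : ℕ → Fin N → MvPolynomial (Fin N) ℝ :=
    fun m => (M ^ m).mulVec (e 0) with hc
  have hck : ∀ m : ℕ, ∀ i : Fin N, v i (m + (N - 1)) = c m i := by
    intro m i
    rw [hvk (m + (N - 1)) i, pow_add, ← Matrix.mulVec_mulVec, hshift (N - 1) le_rfl]
    simp only [hc, Nat.sub_self]
  have hstep : ∀ (m : ℕ) (i : Fin N), c (m + 1) i = -X i * c m ⟨0, hN⟩ +
      (if h : (i : ℕ) + 1 < N then c m ⟨(i : ℕ) + 1, h⟩ else 0) := by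
    intro m i
    have h1 : c (m + 1) = M.mulVec (c m) := by
      simp only [hc]
      rw [pow_succ', ← Matrix.mulVec_mulVec]
    rw [h1, hMv]
  -- the key induction
  have key : ∀ m : ℕ, 1 ≤ m → ∀ i : Fin N,
      ∃ E : MvPolynomial (Fin N) ℝ, Mdeg 3 E ∧
        c m i = (∑ t ∈ Finset.range m, W ((i : ℕ) + m - t) * W t) + E := by
    intro m
    induction m with
    | zero => omega
    | succ m ih =>
      intro _ i
      by_cases hm : 1 ≤ m
      · -- inductive step
        obtain ⟨E0, hE0d, hE0⟩ := ih hm ⟨0, hN⟩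
        simp only [show ((⟨0, hN⟩ : Fin N) : ℕ) = 0 from rfl, zero_add] at hE0
        -- the shifted part
        have hshifted : ∃ E1 : MvPolynomial (Fin N) ℝ, Mdeg 3 E1 ∧
            (if h : (i : ℕ) + 1 < N then c m ⟨(i : ℕ) + 1, h⟩ else 0) =
            (∑ t ∈ Finset.range m, W ((i : ℕ) + (m + 1) - t) * W t) + E1 := by
          by_cases h : (i : ℕ) + 1 < N
          · obtain ⟨E1, hE1d, hE1⟩ := ih hm ⟨(i : ℕ) + 1, h⟩
            refine ⟨E1, hE1d, ?_⟩
            rw [dif_pos h, hE1]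
            congr 1
            apply Finset.sum_congr rfl
            intro t ht
            simp only [Finset.mem_range] at ht
            congr 2
            show (i : ℕ) + 1 + m - t = (i : ℕ) + (m + 1) - t
            omega
          · refine ⟨0, mdeg_zero 3, ?_⟩
            rw [dif_neg h, add_zero]
            symm
            apply Finset.sum_eq_zero
            intro t ht
            simp only [Finset.mem_range] at ht
            have hi : (i : ℕ) = N - 1 := by have := i.isLt; omega
            rw [hWbig ((i : ℕ) + (m + 1) - t) (by omega), zero_mul]
        obtain ⟨E1, hE1d, hE1⟩ := hshifted
        -- split off t = 0 from the sum at index 0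
        have hsplit : (∑ t ∈ Finset.range m, W (m - t) * W t) =
            W m * W 0 + ∑ t ∈ Finset.Ico 1 m, W (m - t) * W t := by
          rw [Finset.range_eq_Ico, Finset.sum_eq_sum_Ico_succ_bot (by omega)]
          simp
        set Q : MvPolynomial (Fin N) ℝ := ∑ t ∈ Finset.Ico 1 m, W (m - t) * W t with hQ
        have hQd : Mdeg 2 Q := by
          rw [hQ]
          apply mdeg_sum
          intro t ht
          simp only [Finset.mem_Ico] at ht
          exact mdeg_mul (hWdeg (m - t) (by omega)) (hWdeg t (by omega))
        refine ⟨-X i * Q + -X i * E0 + E1, ?_, ?_⟩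
        · refine mdeg_add (mdeg_add ?_ ?_) hE1d
          · exact mdeg_mul (mdeg_neg (mdeg_X i le_rfl)) hQd
          · exact mdeg_mono (mdeg_mul (mdeg_neg (mdeg_X i le_rfl)) hE0d) (by omega)
        · rw [hstep m i, hE0, hE1, hsplit, Finset.sum_range_succ]
          have h2 : (i : ℕ) + (m + 1) - m = (i : ℕ) + 1 := by omega
          rw [h2, hWi i, hW0]
          ring
      · -- base case m = 0, so m + 1 = 1
        have hm0 : m = 0 := by omega
        subst hm0
        refine ⟨0, mdeg_zero 3, ?_⟩
        have h1 : c 1 i = -X i := by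
          rw [hstep 0 i]
          have h0 : c 0 ⟨0, hN⟩ = 1 := by simp [hc, Matrix.one_mulVec, he]
          rw [h0, mul_one]
          by_cases h : (i : ℕ) + 1 < N
          · have h2 : c 0 ⟨(i : ℕ) + 1, h⟩ = 0 := by
              simp [hc, Matrix.one_mulVec, he]
            rw [dif_pos h, h2, add_zero]
          · rw [dif_neg h, add_zero]
        rw [h1, add_zero, Finset.sum_range_one]
        have h3 : (i : ℕ) + 1 - 0 = (i : ℕ) + 1 := by omega
        rw [h3, hWi i, hW0]
        ring
  -- finish
  intro k hk2 hk3 i hik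
  obtain ⟨m, rfl⟩ : ∃ m, k = m + (N - 1) := ⟨k - (N - 1), by omega⟩
  set k := m + (N - 1) with hkdef
  have hmN : N + 1 ≤ m := by omega
  obtain ⟨E, hEd, hEq⟩ := key m (by omega) i
  have hsum : (∑ t ∈ Finset.range m, W ((i : ℕ) + m - t) * W t) =
      ∑ q ∈ ((Finset.Icc 1 N) ×ˢ (Finset.Icc 1 N)).filter
          (fun q => q.1 + q.2 + N = (i : ℕ) + 1 + k), W q.1 * W q.2 := by
    have h1 : ∑ t ∈ Finset.range m, W ((i : ℕ) + m - t) * W t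
        = ∑ t ∈ (Finset.range m).filter
            (fun t => 1 ≤ t ∧ t ≤ N ∧ (i : ℕ) + m - t ≤ N), W ((i : ℕ) + m - t) * W t := by
      symm
      apply Finset.sum_filter_of_ne
      intro t ht hne
      simp only [Finset.mem_range] at ht
      have h1' : 1 ≤ t := by
        by_contra hcon
        have ht0 : t = 0 := by omega
        subst ht0
        rw [hWbig ((i : ℕ) + m - 0) (by omega), zero_mul] at hne
        exact hne rfl
      have h2' : t ≤ N := by
        by_contra hcon
        rw [hWbig t (by omega), mul_zero] at hne
        exact hne rfl
      have h3' : (i : ℕ) + m - t ≤ N := by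
        by_contra hcon
        rw [hWbig ((i : ℕ) + m - t) (by omega), zero_mul] at hne
        exact hne rfl
      exact ⟨h1', h2', h3'⟩
    rw [h1]
    apply Finset.sum_nbij' (i := fun t => ((i : ℕ) + m - t, t)) (j := fun q => q.2)
    · intro t ht
      simp only [Finset.mem_filter, Finset.mem_range] at ht
      simp only [Finset.mem_filter, Finset.mem_product, Finset.mem_Icc]
      refine ⟨⟨⟨by omega, ht.2.2.2⟩, ⟨ht.2.1, ht.2.2.1⟩⟩, by omega⟩
    · intro q hq
      simp only [Finset.mem_filter, Finset.mem_product, Finset.mem_Icc] at hq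
      simp only [Finset.mem_filter, Finset.mem_range]
      refine ⟨by omega, hq.1.2.1, hq.1.2.2, by omega⟩
    · intro t _
      rfl
    · intro q hq
      simp only [Finset.mem_filter, Finset.mem_product, Finset.mem_Icc] at hq
      have : (i : ℕ) + m - q.2 = q.1 := by omega
      rw [this]
    · intro t _
      rfl
  exact ⟨E, hEd, by rw [show v i k = c m i from hck m i, hEq, hsum]⟩
end
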